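/- Let ω = ω_R + i·ε with ω_R ∈ ℝ and ε > 0, let μ ∈ ℝ, and let λ ∈ ℂ satisfy Im((λ + a²·ω²)·conj(ω)) < 0. Suppose R is a nontrivial C² solution of the radial ODE on (r₊, ∞) such that near r₊ one has R(r) = (r − r₊)^{ξ}·ρ(r) with ρ extending to a C¹ function on [r₊, r₊ + 1), where ξ := i·(a·m − 2·M·r₊·ω)/(r₊ − r₋), and such that R decays exponentially at infinity. Then ω_R² + ε² < (a·m/(2·M·r₊))². -/

import Mathlib

open Real Set MeasureTheory Filter Topology ComplexConjugate

/-- The larger root `r₊ = M + √(M² − a²)`. -/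
noncomputable def rPlus (M a : ℝ) : ℝ := M + Real.sqrt (M ^ 2 - a ^ 2)

/-- The smaller root `r₋ = M − √(M² − a²)`. -/
noncomputable def rMinus (M a : ℝ) : ℝ := M - Real.sqrt (M ^ 2 - a ^ 2)

/-- `Δ(r) = (r − r₊)(r − r₋)`. -/
noncomputable def Delta (M a r : ℝ) : ℝ := (r - rPlus M a) * (r - rMinus M a)

/-- The radial potential with complex `ω, λ` and real `μ`. -/
noncomputable def VpotC (M a : ℝ) (m : ℤ) (ω lam : ℂ) (μ : ℝ) (r : ℝ) : ℂ :=
  -(((r ^ 2 + a ^ 2) ^ 2 : ℝ) : ℂ) * ω ^ 2 + ((4 * M * a * m * r : ℝ) : ℂ) * ω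
    - ((a ^ 2 * m ^ 2 : ℝ) : ℂ)
    + (Delta M a r : ℂ) * (lam + ((a ^ 2 : ℝ) : ℂ) * ω ^ 2 + ((μ ^ 2 * r ^ 2 : ℝ) : ℂ))

/-- The radial ODE `Δ (Δ R')' − V R = 0` on `(r₊, ∞)` with complex parameters. -/
def RadialODEC (M a : ℝ) (m : ℤ) (ω lam : ℂ) (μ : ℝ) (R : ℝ → ℂ) : Prop :=
  ∀ r ∈ Ioi (rPlus M a),
    (Delta M a r : ℂ) * deriv (fun s => (Delta M a s : ℂ) * deriv R s) r
      - VpotC M a m ω lam μ r * R r = 0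

/-- The exponent `ξ = i (a m − 2 M r₊ ω)/(r₊ − r₋)`. -/
noncomputable def xiExp (M a : ℝ) (m : ℤ) (ω : ℂ) : ℂ :=
  Complex.I * (((a * m : ℝ) : ℂ) - ((2 * M * rPlus M a : ℝ) : ℂ) * ω)
    / ((rPlus M a - rMinus M a : ℝ) : ℂ)

/-- Exponential decay at infinity of `h` together with its derivative. -/
def ExpDecay (rp : ℝ) (h : ℝ → ℂ) : Prop :=
  ∃ C c : ℝ, 0 < C ∧ 0 < c ∧ ∀ r : ℝ, rp + 1 ≤ r →
    ‖h r‖ + ‖deriv h r‖ ≤ C * Real.exp (-c * r)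

-- basic facts about the roots
lemma root_facts (M a : ℝ) (hM : 0 < M) (ha : |a| < M) :
    0 ≤ rMinus M a ∧ 0 < rPlus M a ∧ rMinus M a < rPlus M a ∧
      rPlus M a * rMinus M a = a ^ 2 ∧ rPlus M a ^ 2 + a ^ 2 = 2 * M * rPlus M a := by
  have ha2 : a ^ 2 < M ^ 2 := by
    have h1 := abs_nonneg a
    have := sq_abs a
    nlinarith [abs_lt.1 ha]
  have hs0 : 0 < Real.sqrt (M ^ 2 - a ^ 2) := Real.sqrt_pos.2 (by linarith)
  have hsM : Real.sqrt (M ^ 2 - a ^ 2) ≤ M := by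
    have h1 : Real.sqrt (M ^ 2 - a ^ 2) ≤ Real.sqrt (M ^ 2) :=
      Real.sqrt_le_sqrt (by nlinarith)
    rwa [Real.sqrt_sq hM.le] at h1
  have hsq : Real.sqrt (M ^ 2 - a ^ 2) ^ 2 = M ^ 2 - a ^ 2 :=
    Real.sq_sqrt (by linarith)
  have hprod : rPlus M a * rMinus M a = a ^ 2 := by
    unfold rPlus rMinus; nlinarith [hsq]
  refine ⟨by unfold rMinus; linarith, by unfold rPlus; linarith,
    by unfold rPlus rMinus; linarith, hprod, ?_⟩
  have hsum : rPlus M a + rMinus M a = 2 * M := by unfold rPlus rMinus; ring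
  nlinarith [hprod, hsum]

-- derivative of a complex power of (t - rp)
lemma hasDerivAt_cpow_shift {rp : ℝ} {s : ℝ} (hs : rp < s) (ξ : ℂ) :
    HasDerivAt (fun t : ℝ => (((t - rp : ℝ)) : ℂ) ^ ξ)
      (ξ * (((s - rp : ℝ)) : ℂ) ^ (ξ - 1)) s := by
  have hbase : HasDerivAt (fun t : ℝ => (((t - rp : ℝ)) : ℂ)) 1 s := by
    have := ((hasDerivAt_id s).sub_const rp).ofReal_comp
    simpa using this
  have h0 : (0 : ℝ) < ((((s - rp : ℝ)) : ℂ)).re := by simpa using sub_pos.2 hs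
  have h2 : HasDerivAt (fun z : ℂ => z ^ ξ) (ξ * (((s - rp : ℝ)) : ℂ) ^ (ξ - 1))
      (((s - rp : ℝ)) : ℂ) :=
    (Complex.hasStrictDerivAt_cpow_const (Or.inl h0)).hasDerivAt
  simpa [Function.comp_def, mul_comm, mul_assoc] using h2.comp s hbase

set_option maxHeartbeats 1000000 in
/-- an unstable mode (`Im ω = ε > 0`) with the horizon boundary condition
and exponential decay at infinity must be superradiant:
`ω_R² + ε² < (a m/(2 M r₊))²`. -/
theorem stmt11 (M a : ℝ) (hM : 0 < M) (ha : |a| < M) (m : ℤ)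
    (ωR ε μ : ℝ) (hε : 0 < ε) (lam : ℂ)
    (hlam : ((lam + ((a ^ 2 : ℝ) : ℂ) * (((ωR : ℂ) + Complex.I * ε) ^ 2))
      * conj ((ωR : ℂ) + Complex.I * ε)).im < 0)
    (R ρ : ℝ → ℂ)
    (hC2 : ContDiffOn ℝ 2 R (Ioi (rPlus M a)))
    (hnt : ∃ r ∈ Ioi (rPlus M a), R r ≠ 0)
    (hODE : RadialODEC M a m ((ωR : ℂ) + Complex.I * ε) lam μ R)
    (hρ : ContDiffOn ℝ 1 ρ (Ico (rPlus M a) (rPlus M a + 1)))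
    (hhor : ∀ r ∈ Ioo (rPlus M a) (rPlus M a + 1),
      R r = (((r - rPlus M a : ℝ) : ℂ)) ^ (xiExp M a m ((ωR : ℂ) + Complex.I * ε)) * ρ r)
    (hdecay : ExpDecay (rPlus M a) R) :
    ωR ^ 2 + ε ^ 2 < (a * m / (2 * M * rPlus M a)) ^ 2 := by
  by_contra hcon
  push_neg at hcon
  set ω : ℂ := (ωR : ℂ) + Complex.I * ε with hωdef
  set rp := rPlus M a with hrpdef
  set rm := rMinus M a with hrmdef
  obtain ⟨hrm0, hrp0, hrmrp, hprod, h2Mrp⟩ := root_facts M a hM ha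
  rw [← hrpdef] at hrp0 hprod h2Mrp
  rw [← hrmdef] at hrm0 hprod
  rw [← hrpdef, ← hrmdef] at hrmrp
  have hωre : ω.re = ωR := by simp [hωdef]
  have hωim : ω.im = ε := by simp [hωdef]
  have hnsq : Complex.normSq ω = ωR ^ 2 + ε ^ 2 := by
    rw [Complex.normSq_apply, hωre, hωim]; ring
  set L : ℝ := ((lam + ((a ^ 2 : ℝ) : ℂ) * ω ^ 2) * conj ω).im with hLdef
  have hL : L < 0 := hlam
  have h2Mrp_pos : 0 < 2 * M * rp := by positivity
  have ham : a ^ 2 * (m : ℝ) ^ 2 ≤ (2 * M * rp) ^ 2 * (ωR ^ 2 + ε ^ 2) := by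
    rw [div_pow, div_le_iff₀ (by positivity)] at hcon
    nlinarith [hcon]
  have hΔeq : ∀ r : ℝ, Delta M a r = (r - rp) * (r - rm) := fun r => rfl
  have hΔpos : ∀ r ∈ Ioi rp, 0 < Delta M a r := by
    intro r hr
    rw [mem_Ioi] at hr
    rw [hΔeq]
    have : rm < r := lt_trans hrmrp hr
    nlinarith
  set W : ℝ → ℝ :=
    fun s => (conj ω * ((Delta M a s : ℂ) * deriv R s) * conj (R s)).im with hWdef
  set E : ℝ → ℝ := fun r =>
    (conj ω * VpotC M a m ω lam μ r).im * (Complex.normSq (R r) / Delta M a r)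
      - ε * (Delta M a r * Complex.normSq (deriv R r)) with hEdef
  -- imaginary part of conj ω * V
  have himV : ∀ r : ℝ, (conj ω * VpotC M a m ω lam μ r).im
      = ε * (a ^ 2 * (m : ℝ) ^ 2) - ε * ((r ^ 2 + a ^ 2) ^ 2 * (ωR ^ 2 + ε ^ 2))
        + Delta M a r * (L - ε * (μ ^ 2 * r ^ 2)) := by
    intro r
    have hexp : conj ω * VpotC M a m ω lam μ r
        = ((-((r ^ 2 + a ^ 2) ^ 2) : ℝ) : ℂ) * (conj ω * ω ^ 2)
          + ((4 * M * a * m * r : ℝ) : ℂ) * (conj ω * ω)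
          + ((-(a ^ 2 * (m : ℝ) ^ 2) : ℝ) : ℂ) * conj ω
          + ((Delta M a r : ℝ) : ℂ) * ((lam + ((a ^ 2 : ℝ) : ℂ) * ω ^ 2) * conj ω)
          + ((Delta M a r * (μ ^ 2 * r ^ 2) : ℝ) : ℂ) * conj ω := by
      unfold VpotC; push_cast; ring
    have h1 : conj ω * ω ^ 2 = ((Complex.normSq ω : ℝ) : ℂ) * ω := by
      rw [sq, ← mul_assoc, mul_comm (conj ω) ω, Complex.mul_conj]
    have h2 : conj ω * ω = ((Complex.normSq ω : ℝ) : ℂ) := by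
      rw [mul_comm, Complex.mul_conj]
    rw [hexp, h1, h2]
    simp only [Complex.add_im, Complex.im_ofReal_mul, Complex.ofReal_im,
      Complex.conj_im, hωim, hnsq, ← hLdef, mul_zero]
    ring
  -- pointwise bound on E
  have hEle : ∀ r ∈ Ioi rp, E r ≤ L * Complex.normSq (R r) := by
    intro r hr
    have hd := hΔpos r hr
    have hrrp : rp < r := hr
    have hb : 2 * M * rp ≤ r ^ 2 + a ^ 2 := by nlinarith
    have hA : (2 * M * rp) ^ 2 ≤ (r ^ 2 + a ^ 2) ^ 2 := by nlinarith
    have hV1 : (conj ω * VpotC M a m ω lam μ r).im ≤ Delta M a r * L := by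
      rw [himV r]
      have h3 : ε * (a ^ 2 * (m : ℝ) ^ 2)
          ≤ ε * ((r ^ 2 + a ^ 2) ^ 2 * (ωR ^ 2 + ε ^ 2)) := by
        have : a ^ 2 * (m : ℝ) ^ 2 ≤ (r ^ 2 + a ^ 2) ^ 2 * (ωR ^ 2 + ε ^ 2) := by nlinarith
        exact mul_le_mul_of_nonneg_left this hε.le
      have h4 : 0 ≤ Delta M a r * (ε * (μ ^ 2 * r ^ 2)) := by positivity
      have h8 : Delta M a r * (L - ε * (μ ^ 2 * r ^ 2))
          = Delta M a r * L - Delta M a r * (ε * (μ ^ 2 * r ^ 2)) := by ring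
      linarith
    have h5 : (conj ω * VpotC M a m ω lam μ r).im * (Complex.normSq (R r) / Delta M a r)
        ≤ (Delta M a r * L) * (Complex.normSq (R r) / Delta M a r) :=
      mul_le_mul_of_nonneg_right hV1 (div_nonneg (Complex.normSq_nonneg _) hd.le)
    have h6 : (Delta M a r * L) * (Complex.normSq (R r) / Delta M a r)
        = L * Complex.normSq (R r) := by
      field_simp
    have h7 : 0 ≤ ε * (Delta M a r * Complex.normSq (deriv R r)) :=
      mul_nonneg hε.le (mul_nonneg hd.le (Complex.normSq_nonneg _))
    rw [h6] at h5
    simp only [hEdef]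
    linarith
  -- key derivative computation
  have key : ∀ r ∈ Ioi rp, HasDerivAt W (E r) r := by
    intro r hr
    have hd := hΔpos r hr
    have hΔne : ((Delta M a r : ℝ) : ℂ) ≠ 0 := by
      simpa using hd.ne'
    have hRat : ContDiffAt ℝ 2 R r := hC2.contDiffAt (isOpen_Ioi.mem_nhds hr)
    have hRd : HasDerivAt R (deriv R r) r :=
      (hRat.differentiableAt (by norm_num)).hasDerivAt
    have hR'd : DifferentiableAt ℝ (deriv R) r :=
      ((hC2.deriv_of_isOpen (m := 1) isOpen_Ioi (by norm_num)).differentiableOn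
        one_ne_zero).differentiableAt (isOpen_Ioi.mem_nhds hr)
    have hΔd : HasDerivAt (fun s => ((Delta M a s : ℝ) : ℂ))
        ((((r - rm) + (r - rp) : ℝ)) : ℂ) r := by
      have h0 : HasDerivAt (fun s : ℝ => (s - rp) * (s - rm))
          (1 * (r - rm) + (r - rp) * 1) r :=
        ((hasDerivAt_id r).sub_const rp).mul ((hasDerivAt_id r).sub_const rm)
      have h2 := h0.ofReal_comp
      have h3 : (fun s : ℝ => (((s - rp) * (s - rm) : ℝ) : ℂ))
          = fun s : ℝ => ((Delta M a s : ℝ) : ℂ) := by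
        funext s; rw [hΔeq]
      rw [h3] at h2
      convert h2 using 1
      push_cast; ring
    have hgd : DifferentiableAt ℝ (fun s => ((Delta M a s : ℝ) : ℂ) * deriv R s) r :=
      hΔd.differentiableAt.mul hR'd
    have hg : HasDerivAt (fun s => ((Delta M a s : ℝ) : ℂ) * deriv R s)
        (deriv (fun s => ((Delta M a s : ℝ) : ℂ) * deriv R s) r) r := hgd.hasDerivAt
    have hgval : deriv (fun s => ((Delta M a s : ℝ) : ℂ) * deriv R s) r
        = VpotC M a m ω lam μ r * R r / ((Delta M a r : ℝ) : ℂ) := by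
      have h0 := hODE r hr
      rw [eq_div_iff hΔne]
      linear_combination h0
    have h1 : HasDerivAt (fun s => conj ω * (((Delta M a s : ℝ) : ℂ) * deriv R s) * conj (R s))
        ((conj ω * deriv (fun s => ((Delta M a s : ℝ) : ℂ) * deriv R s) r) * conj (R r)
          + (conj ω * (((Delta M a r : ℝ) : ℂ) * deriv R r)) * conj (deriv R r)) r :=
      (hg.const_mul (conj ω)).mul hRd.star
    have h2 := Complex.imCLM.hasFDerivAt.comp_hasDerivAt r h1
    have hval : Complex.imCLM ((conj ω * deriv (fun s => ((Delta M a s : ℝ) : ℂ) * deriv R s) r) * conj (R r)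
          + (conj ω * (((Delta M a r : ℝ) : ℂ) * deriv R r)) * conj (deriv R r)) = E r := by
      have hu := Complex.mul_conj (R r)
      have hv := Complex.mul_conj (deriv R r)
      have e1 : (conj ω * deriv (fun s => ((Delta M a s : ℝ) : ℂ) * deriv R s) r) * conj (R r)
            + (conj ω * (((Delta M a r : ℝ) : ℂ) * deriv R r)) * conj (deriv R r)
          = (conj ω * VpotC M a m ω lam μ r)
              * (((Complex.normSq (R r) / Delta M a r : ℝ)) : ℂ)
            + conj ω * (((Delta M a r * Complex.normSq (deriv R r) : ℝ)) : ℂ) := by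
        rw [hgval]
        push_cast
        field_simp
        linear_combination (conj ω * VpotC M a m ω lam μ r) * hu
          + ((Delta M a r : ℂ) * (Delta M a r : ℂ) * conj ω) * hv
      have e2 : Complex.imCLM ((conj ω * VpotC M a m ω lam μ r)
              * (((Complex.normSq (R r) / Delta M a r : ℝ)) : ℂ)
            + conj ω * (((Delta M a r * Complex.normSq (deriv R r) : ℝ)) : ℂ)) = E r := by
        have p1 : ∀ (z : ℂ) (t : ℝ), (z * (t : ℂ)).im = z.im * t := by
          intro z t
          simp [Complex.mul_im]
        rw [Complex.imCLM_apply, Complex.add_im, p1, p1, Complex.conj_im, hωim]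
        simp only [hEdef]
        ring
      rw [e1, e2]
    rw [hval] at h2
    exact h2.congr_deriv rfl

  -- monotonicity
  have hWderiv : ∀ x ∈ Ioi rp, deriv W x ≤ 0 := by
    intro x hx
    rw [(key x hx).deriv]
    calc E x ≤ L * Complex.normSq (R x) := hEle x hx
      _ ≤ 0 := mul_nonpos_of_nonpos_of_nonneg hL.le (Complex.normSq_nonneg _)
  have hWcont : ContinuousOn W (Ioi rp) :=
    fun x hx => ((key x hx).continuousAt).continuousWithinAt
  have hWdiff : DifferentiableOn ℝ W (interior (Ioi rp)) := by
    rw [interior_Ioi]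
    exact fun x hx => ((key x hx).differentiableAt).differentiableWithinAt
  have hanti : AntitoneOn W (Ioi rp) := by
    refine antitoneOn_of_deriv_nonpos (convex_Ioi rp) hWcont hWdiff ?_
    intro x hx
    rw [interior_Ioi] at hx
    exact hWderiv x hx
  -- limit at infinity
  have hWtop : Tendsto W atTop (𝓝 0) := by
    obtain ⟨C, c, hC, hc, hbound⟩ := hdecay
    have hg : Tendsto (fun r : ℝ => r ^ 2 * Real.exp (-(2 * c) * r)) atTop (𝓝 0) := by
      have h2c : (0 : ℝ) < 2 * c := by linarith
      have comp := (tendsto_pow_mul_exp_neg_atTop_nhds_zero 2).comp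
        (tendsto_id.const_mul_atTop h2c)
      have heq : (fun r : ℝ => r ^ 2 * Real.exp (-(2 * c) * r))
          = fun r : ℝ => (1 / (2 * c) ^ 2) * (((2 * c) * r) ^ 2 * Real.exp (-((2 * c) * r))) := by
        funext r
        field_simp
      rw [heq]
      have := comp.const_mul (1 / (2 * c) ^ 2)
      simp only [Function.comp, mul_zero, one_div] at this ⊢
      exact this
    apply squeeze_zero_norm'
      (a := fun r : ℝ => (‖ω‖ * C ^ 2) * (r ^ 2 * Real.exp (-(2 * c) * r)))
    · filter_upwards [eventually_ge_atTop (rp + 1), eventually_ge_atTop (0 : ℝ)] with r hr hr0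
      have hrIoi : r ∈ Ioi rp := by rw [mem_Ioi]; linarith
      have hd := hΔpos r hrIoi
      have e1 : ‖deriv R r‖ ≤ C * Real.exp (-c * r) := by
        have h0 := hbound r hr
        have h1 := norm_nonneg (R r)
        linarith
      have e2 : ‖R r‖ ≤ C * Real.exp (-c * r) := by
        have h0 := hbound r hr
        have h1 := norm_nonneg (deriv R r)
        linarith
      have e4 : Delta M a r ≤ r ^ 2 := by
        rw [hΔeq]
        nlinarith [hrp0, hrm0, mem_Ioi.1 hrIoi, hrmrp]
      have h1 : ‖W r‖ ≤ ‖conj ω * ((Delta M a r : ℂ) * deriv R r) * conj (R r)‖ := by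
        rw [Real.norm_eq_abs]
        exact Complex.abs_im_le_norm _
      have h2 : ‖conj ω * ((Delta M a r : ℂ) * deriv R r) * conj (R r)‖
          = ‖ω‖ * (Delta M a r * ‖deriv R r‖) * ‖R r‖ := by
        rw [norm_mul, norm_mul, norm_mul, RCLike.norm_conj, RCLike.norm_conj,
          Complex.norm_real, Real.norm_eq_abs, abs_of_pos hd]
      calc ‖W r‖ ≤ ‖ω‖ * (Delta M a r * ‖deriv R r‖) * ‖R r‖ := h1.trans (le_of_eq h2)
        _ ≤ ‖ω‖ * (r ^ 2 * (C * Real.exp (-c * r))) * (C * Real.exp (-c * r)) := by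
            gcongr
        _ = (‖ω‖ * C ^ 2) * (r ^ 2 * Real.exp (-(2 * c) * r)) := by
            rw [show -(2 * c) * r = (-c * r) + (-c * r) by ring, Real.exp_add]
            ring
    · simpa using hg.const_mul (‖ω‖ * C ^ 2)
  -- the exponent and its real part
  set ξ : ℂ := xiExp M a m ω with hξdef
  set q : ℝ := ξ.re with hqdef
  have hq : 0 < q := by
    rw [hqdef, hξdef]
    unfold xiExp
    rw [← hrpdef, ← hrmdef, Complex.div_ofReal_re]
    have h1 : (Complex.I * (((a * (m : ℤ) : ℝ) : ℂ) - ((2 * M * rp : ℝ) : ℂ) * ω)).re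
        = 2 * M * rp * ε := by
      simp [Complex.mul_re, Complex.mul_im, Complex.I_re, Complex.I_im, Complex.sub_im,
        Complex.sub_re, Complex.ofReal_re, Complex.ofReal_im, hωim, hωre]
    rw [h1]
    have : (0:ℝ) < rp - rm := by linarith
    positivity
  -- limit at the horizon
  have hfle : 𝓝[>] rp ≤ 𝓝[Ico rp (rp + 1)] rp := by
    rw [← nhdsWithin_Ioo_eq_nhdsGT (show rp < rp + 1 by linarith)]
    exact nhdsWithin_mono _ Ioo_subset_Ico_self
  have hWhor : Tendsto W (𝓝[>] rp) (𝓝 0) := by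
    set D0 : ℂ := derivWithin ρ (Ico rp (rp + 1)) rp with hD0def
    set B : ℝ → ℝ := fun s =>
      ‖ω‖ * ((s - rm) * ((‖ξ‖ * ‖ρ s‖ + (s - rp) * ‖deriv ρ s‖) * ‖ρ s‖)) * (s - rp) ^ (2 * q)
      with hBdef
    have hρc : ContinuousWithinAt ρ (Ico rp (rp + 1)) rp :=
      hρ.continuousOn rp ⟨le_rfl, by linarith⟩
    have t2 : Tendsto ρ (𝓝[>] rp) (𝓝 (ρ rp)) := hρc.tendsto.mono_left hfle
    have hdercont : ContinuousWithinAt (derivWithin ρ (Ico rp (rp + 1))) (Ico rp (rp + 1)) rp :=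
      (hρ.continuousOn_derivWithin (uniqueDiffOn_Ico rp (rp + 1)) le_rfl) rp ⟨le_rfl, by linarith⟩
    have hIcoNhds : ∀ s ∈ Ioo rp (rp + 1), Ico rp (rp + 1) ∈ 𝓝 s := by
      intro s hs
      exact mem_nhds_iff.2 ⟨Ioo rp (rp + 1), Ioo_subset_Ico_self, isOpen_Ioo, hs⟩
    have t3 : Tendsto (fun s => deriv ρ s) (𝓝[>] rp) (𝓝 D0) := by
      refine (hdercont.tendsto.mono_left hfle).congr' ?_
      filter_upwards [Ioo_mem_nhdsGT_of_mem (⟨le_rfl, by linarith⟩ : rp ∈ Ico rp (rp + 1))]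
        with s hs
      exact derivWithin_of_mem_nhds (hIcoNhds s hs)
    have t4a : Tendsto (fun s : ℝ => s - rp) (𝓝[>] rp) (𝓝 0) := by
      have h0 : Tendsto (fun s : ℝ => s - rp) (𝓝 rp) (𝓝 (rp - rp)) :=
        (continuous_sub_right rp).tendsto rp
      simpa using h0.mono_left (nhdsWithin_le_nhds (s := Ioi rp))
    have t4 : Tendsto (fun s : ℝ => s - rp) (𝓝[>] rp) (𝓝[>] 0) := by
      refine tendsto_nhdsWithin_of_tendsto_nhds_of_eventually_within _ t4a ?_
      filter_upwards [self_mem_nhdsWithin] with s hs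
      exact sub_pos.2 (show rp < s from hs)
    have t5 : Tendsto (fun s : ℝ => (s - rp) ^ (2 * q)) (𝓝[>] rp) (𝓝 0) := by
      have hp : (0:ℝ) < 2 * q := by linarith
      have hrpow : Tendsto (fun x : ℝ => x ^ (2 * q)) (𝓝[>] 0) (𝓝 0) := by
        have hco := (Real.continuousAt_rpow_const 0 (2 * q) (Or.inr hp.le)).continuousWithinAt
          (s := Ioi (0:ℝ))
        unfold ContinuousWithinAt at hco
        simpa [Real.zero_rpow hp.ne'] using hco
      exact hrpow.comp t4
    have hBlim : Tendsto B (𝓝[>] rp) (𝓝 0) := by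
      rw [hBdef]
      have tmain : Tendsto
          (fun s => ‖ω‖ * ((s - rm) * ((‖ξ‖ * ‖ρ s‖ + (s - rp) * ‖deriv ρ s‖) * ‖ρ s‖)))
          (𝓝[>] rp)
          (𝓝 (‖ω‖ * ((rp - rm) * ((‖ξ‖ * ‖ρ rp‖ + 0 * ‖D0‖) * ‖ρ rp‖)))) := by
        apply Tendsto.const_mul
        apply Tendsto.mul
        · have h0 : Tendsto (fun s : ℝ => s - rm) (𝓝 rp) (𝓝 (rp - rm)) :=
            (continuous_sub_right rm).tendsto rp
          exact h0.mono_left (nhdsWithin_le_nhds (s := Ioi rp))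
        · exact (((tendsto_const_nhds.mul t2.norm).add
            (t4a.mul t3.norm)).mul t2.norm)
      have := tmain.mul t5
      simpa using this
    apply squeeze_zero_norm' (a := B)
    · filter_upwards [Ioo_mem_nhdsGT_of_mem (⟨le_rfl, by linarith⟩ : rp ∈ Ico rp (rp + 1))]
        with s hs
      have hx : (0:ℝ) < s - rp := sub_pos.2 hs.1
      have hx1 : s - rp ≤ 1 := by
        have := hs.2
        linarith
      have hsIoi : s ∈ Ioi rp := hs.1
      have hd := hΔpos s hsIoi
      have hzx : ((s - rp : ℝ) : ℂ) ≠ 0 := Complex.ofReal_ne_zero.2 hx.ne'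
      have hRs : R s = ((s - rp : ℝ) : ℂ) ^ ξ * ρ s := hhor s hs
      have hρd : HasDerivAt ρ (deriv ρ s) s :=
        ((hρ.contDiffAt (hIcoNhds s hs)).differentiableAt one_ne_zero).hasDerivAt
      have hprodd : HasDerivAt (fun t => ((t - rp : ℝ) : ℂ) ^ ξ * ρ t)
          (ξ * ((s - rp : ℝ) : ℂ) ^ (ξ - 1) * ρ s + ((s - rp : ℝ) : ℂ) ^ ξ * deriv ρ s) s :=
        (hasDerivAt_cpow_shift hs.1 ξ).mul hρd
      have hev : (fun t => ((t - rp : ℝ) : ℂ) ^ ξ * ρ t) =ᶠ[𝓝 s] R :=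
        eventually_of_mem (isOpen_Ioo.mem_nhds hs) (fun t ht => (hhor t ht).symm)
      have hRderiv : deriv R s
          = ξ * ((s - rp : ℝ) : ℂ) ^ (ξ - 1) * ρ s + ((s - rp : ℝ) : ℂ) ^ ξ * deriv ρ s := by
        rw [← hev.deriv_eq]
        exact hprodd.deriv
      have habsxp : ‖((s - rp : ℝ) : ℂ) ^ ξ‖ = (s - rp) ^ q := by
        exact Complex.norm_cpow_eq_rpow_re_of_pos hx ξ
      have habsR : ‖R s‖ = (s - rp) ^ q * ‖ρ s‖ := by
        rw [hRs, norm_mul, habsxp]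
      have hxR' : (s - rp) * ‖deriv R s‖
          ≤ (‖ξ‖ * ‖ρ s‖ + (s - rp) * ‖deriv ρ s‖) * (s - rp) ^ q := by
        have hmul : ((s - rp : ℝ) : ℂ) * deriv R s
            = (ξ * ρ s + ((s - rp : ℝ) : ℂ) * deriv ρ s) * ((s - rp : ℝ) : ℂ) ^ ξ := by
          rw [hRderiv, Complex.cpow_sub _ _ hzx, Complex.cpow_one]
          set z : ℂ := ((s - rp : ℝ) : ℂ) with hzdef
          field_simp
        have hnm : (s - rp) * ‖deriv R s‖
            = ‖ξ * ρ s + ((s - rp : ℝ) : ℂ) * deriv ρ s‖ * (s - rp) ^ q := by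
          have h0 : ‖((s - rp : ℝ) : ℂ) * deriv R s‖
              = (s - rp) * ‖deriv R s‖ := by
            rw [norm_mul, Complex.norm_real, Real.norm_eq_abs, abs_of_pos hx]
          rw [← h0, hmul, norm_mul, habsxp]
        rw [hnm]
        have hb : ‖ξ * ρ s + ((s - rp : ℝ) : ℂ) * deriv ρ s‖
            ≤ ‖ξ‖ * ‖ρ s‖ + (s - rp) * ‖deriv ρ s‖ := by
          refine (norm_add_le _ _).trans ?_
          rw [norm_mul, norm_mul, Complex.norm_real, Real.norm_eq_abs, abs_of_pos hx]
        exact mul_le_mul_of_nonneg_right hb (Real.rpow_nonneg hx.le q)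
      have h1 : ‖W s‖ ≤ ‖conj ω * ((Delta M a s : ℂ) * deriv R s) * conj (R s)‖ := by
        rw [Real.norm_eq_abs]
        exact Complex.abs_im_le_norm _
      have h2 : ‖conj ω * ((Delta M a s : ℂ) * deriv R s) * conj (R s)‖
          = ‖ω‖ * (Delta M a s * ‖deriv R s‖) * ‖R s‖ := by
        rw [norm_mul, norm_mul, norm_mul, RCLike.norm_conj, RCLike.norm_conj,
          Complex.norm_real, Real.norm_eq_abs, abs_of_pos hd]
      have hx2q : (s - rp) ^ q * (s - rp) ^ q = (s - rp) ^ (2 * q) := by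
        rw [← Real.rpow_add hx]
        ring_nf
      have h3 : ‖ω‖ * (Delta M a s * ‖deriv R s‖) * ‖R s‖ ≤ B s := by
        rw [habsR, hΔeq, hBdef]
        have hsm : 0 ≤ s - rm := by
          have : rm < s := lt_trans hrmrp hs.1
          linarith
        calc ‖ω‖ * ((s - rp) * (s - rm) * ‖deriv R s‖) * ((s - rp) ^ q * ‖ρ s‖)
            = ‖ω‖ * ((s - rm) * (((s - rp) * ‖deriv R s‖) * ((s - rp) ^ q * ‖ρ s‖))) := by
              ring
          _ = (‖ω‖ * (s - rm)) * (((s - rp) * ‖deriv R s‖) * ((s - rp) ^ q * ‖ρ s‖)) := by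
              ring
          _ ≤ (‖ω‖ * (s - rm)) * (((‖ξ‖ * ‖ρ s‖ + (s - rp) * ‖deriv ρ s‖) * (s - rp) ^ q)
                * ((s - rp) ^ q * ‖ρ s‖)) := by
              refine mul_le_mul_of_nonneg_left ?_ (mul_nonneg (norm_nonneg _) hsm)
              exact mul_le_mul_of_nonneg_right hxR'
                (mul_nonneg (Real.rpow_nonneg hx.le q) (norm_nonneg _))
          _ = ‖ω‖ * ((s - rm) * (((‖ξ‖ * ‖ρ s‖ + (s - rp) * ‖deriv ρ s‖) * (s - rp) ^ q)
                * ((s - rp) ^ q * ‖ρ s‖))) := by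
              ring
          _ = ‖ω‖ * ((s - rm) * ((‖ξ‖ * ‖ρ s‖ + (s - rp) * ‖deriv ρ s‖) * ‖ρ s‖))
                * ((s - rp) ^ q * (s - rp) ^ q) := by ring
          _ = ‖ω‖ * ((s - rm) * ((‖ξ‖ * ‖ρ s‖ + (s - rp) * ‖deriv ρ s‖) * ‖ρ s‖))
                * (s - rp) ^ (2 * q) := by rw [hx2q]
      exact h1.trans (h2 ▸ h3)
    · exact hBlim
  -- W vanishes identically
  have hW0 : ∀ s ∈ Ioi rp, W s = 0 := by
    intro s hs
    have h1 : W s ≤ 0 := by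
      refine ge_of_tendsto hWhor ?_
      filter_upwards [Ioo_mem_nhdsGT_of_mem (⟨le_rfl, hs⟩ : rp ∈ Ico rp s)] with t ht
      exact hanti ht.1 hs ht.2.le
    have h2 : 0 ≤ W s := by
      refine le_of_tendsto hWtop ?_
      filter_upwards [eventually_ge_atTop s] with t ht
      exact hanti hs (mem_Ioi.2 (lt_of_lt_of_le (mem_Ioi.1 hs) ht)) ht
    linarith
  -- contradiction at a point where R ≠ 0
  obtain ⟨r₀, hr₀, hR₀⟩ := hnt
  have hW0' : W =ᶠ[𝓝 r₀] fun _ => (0:ℝ) :=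
    eventually_of_mem (isOpen_Ioi.mem_nhds hr₀) (fun t ht => hW0 t ht)
  have hd0 : HasDerivAt W 0 r₀ :=
    (hasDerivAt_const r₀ (0:ℝ)).congr_of_eventuallyEq hW0'
  have hEeq : E r₀ = 0 := (key r₀ hr₀).unique hd0
  have hElt : E r₀ < 0 :=
    lt_of_le_of_lt (hEle r₀ hr₀)
      (mul_neg_of_neg_of_pos hL (Complex.normSq_pos.2 hR₀))
  linarith
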